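/- Let μ be a finite nonnegative compactly supported Borel measure on ℝ² and for ω ∈ S¹ define the projected measure μ_ω on ℝ by ∫ f dμ_ω = ∫ f(x·ω) dμ(x). Suppose supp μ ⊆ B(0,R₀). Then for 0 < τ < 1 and t ∈ ℝ, μ_ω ∗ K¹_τ(t) ≤ C ∫_{−2R}^{2R} (μ ∗ K²_{τ+1})(tω + sω^⊥) ds, where K¹_τ(u) = |u|^{−τ}χ_{[−1,1]}(u), K²_{τ+1}(x) = |x|^{−(τ+1)}χ_{B(0,R)}(x), and R is sufficiently large depending on R₀. -/

import Mathlib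

open MeasureTheory Metric Set
open scoped ENNReal

noncomputable section

abbrev Euc (d : ℕ) := EuclideanSpace ℝ (Fin d)

/-- The truncated Riesz kernel `K_ρ(x) = |x|^{-ρ} χ_{B(0,R)}(x)`. -/
def trKer (d : ℕ) (ρ R : ℝ) (x : Euc d) : ℝ :=
  (Metric.ball (0 : Euc d) R).indicator (fun z => ‖z‖ ^ (-ρ)) x

/-- The one-dimensional kernel `K¹_τ(u) = |u|^{-τ} χ_{[-1,1]}(u)`. -/
def ker1 (τ : ℝ) (u : ℝ) : ℝ := (Set.Icc (-1 : ℝ) 1).indicator (fun v => |v| ^ (-τ)) u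

/-- For an orthonormal pair in the plane, the squared norm is the sum of the squared
inner products. -/
lemma normsq_key (ω p : Euc 2) (hω : ‖ω‖ = 1) (hp : ‖p‖ = 1) (hop : (inner ℝ ω p : ℝ) = 0)
    (z : Euc 2) : ‖z‖ ^ 2 = (inner ℝ z ω : ℝ) ^ 2 + (inner ℝ z p : ℝ) ^ 2 := by
  have c1 : ω 0 ^ 2 + ω 1 ^ 2 = 1 := by
    have : (inner ℝ ω ω : ℝ) = 1 := by rw [real_inner_self_eq_norm_sq, hω]; norm_num
    simp only [PiLp.inner_apply, RCLike.inner_apply, conj_trivial, Fin.sum_univ_two] at this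
    linear_combination this
  have c2 : p 0 ^ 2 + p 1 ^ 2 = 1 := by
    have : (inner ℝ p p : ℝ) = 1 := by rw [real_inner_self_eq_norm_sq, hp]; norm_num
    simp only [PiLp.inner_apply, RCLike.inner_apply, conj_trivial, Fin.sum_univ_two] at this
    linear_combination this
  have c3 : ω 0 * p 0 + ω 1 * p 1 = 0 := by
    have h := hop
    simp only [PiLp.inner_apply, RCLike.inner_apply, conj_trivial, Fin.sum_univ_two] at h
    linear_combination h
  have e1 : ω 0 ^ 2 * p 0 ^ 2 = ω 1 ^ 2 * p 1 ^ 2 := by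
    linear_combination (ω 0 * p 0 - ω 1 * p 1) * c3
  have e2 : ω 0 ^ 2 + p 0 ^ 2 = 1 := by
    linear_combination e1 + (1 - p 0 ^ 2) * c1 + ω 1 ^ 2 * c2
  have e3 : ω 1 ^ 2 + p 1 ^ 2 = 1 := by linear_combination c1 + c2 - e2
  have h1 : ω 0 * (ω 0 * ω 1 + p 0 * p 1) = 0 := by
    linear_combination ω 1 * e2 - ω 1 * c2 + p 1 * c3
  have h2 : ω 1 * (ω 0 * ω 1 + p 0 * p 1) = 0 := by
    linear_combination ω 0 * e3 - ω 0 * c2 + p 0 * c3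
  have e4 : ω 0 * ω 1 + p 0 * p 1 = 0 := by
    linear_combination ω 0 * h1 + ω 1 * h2 - (ω 0 * ω 1 + p 0 * p 1) * c1
  have hz : ‖z‖ ^ 2 = z 0 ^ 2 + z 1 ^ 2 := by
    rw [← real_inner_self_eq_norm_sq]
    simp only [PiLp.inner_apply, RCLike.inner_apply, conj_trivial, Fin.sum_univ_two]
    ring
  rw [hz]
  simp only [PiLp.inner_apply, RCLike.inner_apply, conj_trivial, Fin.sum_univ_two]
  linear_combination (-(z 0 ^ 2)) * e2 - z 1 ^ 2 * e3 - 2 * z 0 * z 1 * e4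

lemma meas_trKer (d : ℕ) (ρ R : ℝ) : Measurable (trKer d ρ R) :=
  Measurable.indicator (measurable_norm.pow measurable_const) measurableSet_ball

set_option maxHeartbeats 800000 in
/-- The pointwise comparison: for `x` in the ball of radius `R₀`, the one-dimensional kernel
evaluated at `t - ⟨x, ω⟩` is dominated by twice the integral over the segment of the
two-dimensional kernel. -/
lemma pointwise_bd (R₀ : ℝ) (hR₀ : 0 < R₀) (τ : ℝ) (hτ0 : 0 < τ) (hτ1 : τ < 1)
    (ω p : Euc 2) (hω : ‖ω‖ = 1) (hp : ‖p‖ = 1) (hop : (inner ℝ ω p : ℝ) = 0)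
    (t : ℝ) (x : Euc 2) (hx : ‖x‖ < R₀) :
    ENNReal.ofReal (ker1 τ (t - (inner ℝ x ω : ℝ))) ≤
      ENNReal.ofReal 2 * ∫⁻ s in Set.Icc (-(2 * (R₀ + 2))) (2 * (R₀ + 2)),
        ENNReal.ofReal (trKer 2 (τ + 1) (R₀ + 2) (t • ω + s • p - x)) ∂volume := by
  set R : ℝ := R₀ + 2 with hR
  set u : ℝ := t - (inner ℝ x ω : ℝ) with hu_def
  by_cases hu : u ∈ Set.Icc (-1 : ℝ) 1
  swap
  · rw [ker1, Set.indicator_of_notMem hu, ENNReal.ofReal_zero]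
    exact bot_le
  by_cases hu0 : u = 0
  · rw [ker1, Set.indicator_of_mem hu, hu0, abs_zero,
      Real.zero_rpow (by linarith : -τ ≠ 0), ENNReal.ofReal_zero]
    exact bot_le
  -- main case
  set d : ℝ := |u| with hd_def
  have hd : 0 < d := abs_pos.mpr hu0
  have hd1 : d ≤ 1 := abs_le.mpr ⟨hu.1, hu.2⟩
  set b : ℝ := (inner ℝ x p : ℝ) with hb_def
  have hb : |b| ≤ ‖x‖ := by
    have h := abs_real_inner_le_norm x p
    rw [hp, mul_one] at h
    exact h
  have hb' := abs_le.mp hb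
  have hsub : Set.Icc b (b + d) ⊆ Set.Icc (-(2 * R)) (2 * R) :=
    Set.Icc_subset_Icc (by simp only [hR]; linarith) (by simp only [hR]; linarith)
  have hωω : (inner ℝ ω ω : ℝ) = 1 := by rw [real_inner_self_eq_norm_sq, hω]; norm_num
  have hpp : (inner ℝ p p : ℝ) = 1 := by rw [real_inner_self_eq_norm_sq, hp]; norm_num
  have hpω : (inner ℝ p ω : ℝ) = 0 := by rw [real_inner_comm]; exact hop
  have hbound : ∀ s ∈ Set.Icc b (b + d),
      ENNReal.ofReal ((1/2) * d ^ (-(τ + 1))) ≤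
        ENNReal.ofReal (trKer 2 (τ + 1) R (t • ω + s • p - x)) := by
    intro s hs
    set z : Euc 2 := t • ω + s • p - x with hz_def
    have hz1 : (inner ℝ z ω : ℝ) = u := by
      rw [hz_def, hu_def, inner_sub_left, inner_add_left, real_inner_smul_left,
        real_inner_smul_left, hωω, hpω]
      ring
    have hz2 : (inner ℝ z p : ℝ) = s - b := by
      rw [hz_def, hb_def, inner_sub_left, inner_add_left, real_inner_smul_left,
        real_inner_smul_left, hpp, hop]
      ring
    have hnorm : ‖z‖ ^ 2 = u ^ 2 + (s - b) ^ 2 := by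
      rw [normsq_key ω p hω hp hop z, hz1, hz2]
    have hsb0 : 0 ≤ s - b := by linarith [hs.1]
    have hsbd : s - b ≤ d := by linarith [hs.2]
    have hdsq : d ^ 2 ≤ ‖z‖ ^ 2 := by
      rw [hnorm, hd_def, sq_abs]
      nlinarith [sq_nonneg (s - b)]
    have hdz : d ≤ ‖z‖ := by
      have h := Real.sqrt_le_sqrt hdsq
      rwa [Real.sqrt_sq hd.le, Real.sqrt_sq (norm_nonneg z)] at h
    have hzpos : 0 < ‖z‖ := lt_of_lt_of_le hd hdz
    have hsb2 : (s - b) ^ 2 ≤ 1 := by nlinarith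
    have hu2 : u ^ 2 ≤ 1 := by
      have : u ^ 2 = d ^ 2 := by rw [hd_def, sq_abs]
      nlinarith
    have hzsq : ‖z‖ ^ 2 ≤ 2 := by rw [hnorm]; linarith
    have hzR : ‖z‖ < R := by
      nlinarith [sq_nonneg (‖z‖ - 2), norm_nonneg z]
    have hmem : z ∈ Metric.ball (0 : Euc 2) R := by
      rw [Metric.mem_ball, dist_zero_right]; exact hzR
    rw [trKer, Set.indicator_of_mem hmem]
    apply ENNReal.ofReal_le_ofReal
    have hs2 : Real.sqrt 2 ^ (2 : ℕ) = 2 := Real.sq_sqrt (by norm_num)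
    have hsqrt1 : (1 : ℝ) ≤ Real.sqrt 2 := Real.one_le_sqrt.mpr (by norm_num)
    have h2d : ‖z‖ ^ 2 ≤ (Real.sqrt 2 * d) ^ 2 := by
      have hud : u ^ 2 = d ^ 2 := by rw [hd_def, sq_abs]
      rw [mul_pow]
      push_cast [hs2]
      nlinarith
    have hzle : ‖z‖ ≤ Real.sqrt 2 * d := by
      have h := Real.sqrt_le_sqrt h2d
      rwa [Real.sqrt_sq (norm_nonneg z),
        Real.sqrt_sq (mul_nonneg (Real.sqrt_nonneg 2) hd.le)] at h
    have h1 : (Real.sqrt 2 * d) ^ (-(τ + 1)) ≤ ‖z‖ ^ (-(τ + 1)) :=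
      Real.rpow_le_rpow_of_nonpos hzpos hzle (by linarith)
    have h2 : (Real.sqrt 2 * d) ^ (-(τ + 1)) =
        Real.sqrt 2 ^ (-(τ + 1)) * d ^ (-(τ + 1)) :=
      Real.mul_rpow (Real.sqrt_nonneg 2) hd.le
    have h3 : (1/2 : ℝ) ≤ Real.sqrt 2 ^ (-(τ + 1) : ℝ) := by
      have hm2 : Real.sqrt 2 ^ (-2 : ℝ) = 1/2 := by
        rw [show (-2 : ℝ) = -((2:ℕ):ℝ) by norm_num, Real.rpow_neg (Real.sqrt_nonneg 2),
          Real.rpow_natCast, hs2]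
        norm_num
      calc (1/2 : ℝ) = Real.sqrt 2 ^ (-2 : ℝ) := hm2.symm
        _ ≤ Real.sqrt 2 ^ (-(τ + 1) : ℝ) :=
            Real.rpow_le_rpow_of_exponent_le hsqrt1 (by linarith)
    have hdpow : (0:ℝ) ≤ d ^ (-(τ + 1)) := (Real.rpow_pos_of_pos hd _).le
    calc (1/2 : ℝ) * d ^ (-(τ + 1)) ≤ Real.sqrt 2 ^ (-(τ + 1) : ℝ) * d ^ (-(τ + 1)) :=
          mul_le_mul_of_nonneg_right h3 hdpow
      _ = (Real.sqrt 2 * d) ^ (-(τ + 1)) := h2.symm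
      _ ≤ ‖z‖ ^ (-(τ + 1)) := h1
  have hFmeas : Measurable fun s : ℝ =>
      ENNReal.ofReal (trKer 2 (τ + 1) R (t • ω + s • p - x)) := by
    apply ENNReal.measurable_ofReal.comp
    apply (meas_trKer 2 (τ + 1) R).comp
    fun_prop
  have key2 : ENNReal.ofReal ((1/2) * d ^ (-(τ + 1))) * ENNReal.ofReal d ≤
      ∫⁻ s in Set.Icc (-(2 * R)) (2 * R),
        ENNReal.ofReal (trKer 2 (τ + 1) R (t • ω + s • p - x)) ∂volume := by
    have hvol : volume (Set.Icc b (b + d)) = ENNReal.ofReal d := by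
      rw [Real.volume_Icc]; congr 1; ring
    calc ENNReal.ofReal ((1/2) * d ^ (-(τ + 1))) * ENNReal.ofReal d
        = ∫⁻ _ in Set.Icc b (b + d),
            ENNReal.ofReal ((1/2) * d ^ (-(τ + 1))) ∂volume := by
          rw [setLIntegral_const, hvol]
      _ ≤ ∫⁻ s in Set.Icc b (b + d),
            ENNReal.ofReal (trKer 2 (τ + 1) R (t • ω + s • p - x)) ∂volume :=
          setLIntegral_mono hFmeas hbound
      _ ≤ ∫⁻ s in Set.Icc (-(2 * R)) (2 * R),
            ENNReal.ofReal (trKer 2 (τ + 1) R (t • ω + s • p - x)) ∂volume :=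
          lintegral_mono_set hsub
  rw [ker1, Set.indicator_of_mem hu, ← hd_def]
  have heq : d ^ (-τ) = 2 * ((1/2) * d ^ (-(τ + 1)) * d) := by
    rw [show (-τ : ℝ) = (-(τ + 1)) + 1 by ring, Real.rpow_add hd, Real.rpow_one]; ring
  calc ENNReal.ofReal (d ^ (-τ))
      = ENNReal.ofReal 2 * (ENNReal.ofReal ((1/2) * d ^ (-(τ + 1))) * ENNReal.ofReal d) := by
        rw [← ENNReal.ofReal_mul (by positivity), ← ENNReal.ofReal_mul (by norm_num), heq]
    _ ≤ ENNReal.ofReal 2 * ∫⁻ s in Set.Icc (-(2 * R)) (2 * R),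
          ENNReal.ofReal (trKer 2 (τ + 1) R (t • ω + s • p - x)) ∂volume :=
        mul_le_mul_right key2 _

theorem stmt14 :
    ∃ C > (0 : ℝ), ∀ R₀ > (0 : ℝ), ∃ R > (0 : ℝ),
      ∀ (μ : Measure (Euc 2)), IsFiniteMeasure μ → μ (Metric.ball (0 : Euc 2) R₀)ᶜ = 0 →
      ∀ τ : ℝ, 0 < τ → τ < 1 →
      ∀ (ω p : Euc 2), ‖ω‖ = 1 → ‖p‖ = 1 → (inner ℝ ω p : ℝ) = 0 →
      ∀ t : ℝ,
        (∫⁻ x, ENNReal.ofReal (ker1 τ (t - (inner ℝ x ω : ℝ))) ∂μ) ≤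
          ENNReal.ofReal C *
            ∫⁻ s in Set.Icc (-(2 * R)) (2 * R),
              ∫⁻ y, ENNReal.ofReal (trKer 2 (τ + 1) R (t • ω + s • p - y)) ∂μ ∂volume := by
  refine ⟨2, by norm_num, fun R₀ hR₀ => ⟨R₀ + 2, by linarith, ?_⟩⟩
  intro μ hfin hsupp τ hτ0 hτ1 ω p hω hp hop t
  have hae : ∀ᵐ x ∂μ, ‖x‖ < R₀ := by
    rw [ae_iff]
    have hset : {x : Euc 2 | ¬ ‖x‖ < R₀} = (Metric.ball (0 : Euc 2) R₀)ᶜ := by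
      ext x; simp [mem_ball_zero_iff]
    rw [hset]; exact hsupp
  have hmeasF : Measurable (Function.uncurry fun (x : Euc 2) (s : ℝ) =>
      ENNReal.ofReal (trKer 2 (τ + 1) (R₀ + 2) (t • ω + s • p - x))) := by
    apply ENNReal.measurable_ofReal.comp
    apply (meas_trKer 2 (τ + 1) (R₀ + 2)).comp
    fun_prop
  calc (∫⁻ x, ENNReal.ofReal (ker1 τ (t - (inner ℝ x ω : ℝ))) ∂μ)
      ≤ ∫⁻ x, ENNReal.ofReal 2 * ∫⁻ s in Set.Icc (-(2 * (R₀ + 2))) (2 * (R₀ + 2)),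
          ENNReal.ofReal (trKer 2 (τ + 1) (R₀ + 2) (t • ω + s • p - x)) ∂volume ∂μ := by
        refine lintegral_mono_ae (hae.mono fun x hx => ?_)
        exact pointwise_bd R₀ hR₀ τ hτ0 hτ1 ω p hω hp hop t x hx
    _ = ENNReal.ofReal 2 * ∫⁻ x, ∫⁻ s in Set.Icc (-(2 * (R₀ + 2))) (2 * (R₀ + 2)),
          ENNReal.ofReal (trKer 2 (τ + 1) (R₀ + 2) (t • ω + s • p - x)) ∂volume ∂μ :=
        lintegral_const_mul' _ _ ENNReal.ofReal_ne_top
    _ = ENNReal.ofReal 2 * ∫⁻ s in Set.Icc (-(2 * (R₀ + 2))) (2 * (R₀ + 2)),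
          ∫⁻ x, ENNReal.ofReal (trKer 2 (τ + 1) (R₀ + 2) (t • ω + s • p - x)) ∂μ ∂volume := by
        congr 1
        exact lintegral_lintegral_swap hmeasF.aemeasurable
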